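/- arXiv:math/9605234 — 2 statements merged into one kernel-verified Lean document; each statement's English description precedes it below -/
import Mathlib

section
/- Let κ < λ be regular cardinals with θ^κ < λ for every θ < λ, and let D be a normal filter on λ that is κ-presaturated and satisfies {i < λ : cf(i) ≥ κ} ∈ D. Then for every κ₀ < κ, every family of maximal antichains I_α = {A_i^α : i < i_α} of D⁺ (α < κ₀), and every B ∈ D⁺, there exists A** ∈ D⁺ with A** ⊆ B such that for every α < κ₀ there is exactly one i < i_α with A** ∩ A_i^α ∈ D⁺. -/
open Set Cardinal

noncomputable section

/-! ## Normal filters on the ordinals below `lam`, positive sets, antichains,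
presaturation (Baumgartner–Taylor / Gitik–Shelah) -/

/-- A normal filter on (the set of ordinals below) `lam`:  a proper,
`lam`-complete filter on `Set.Iio lam` containing all final segments and closed
under diagonal intersections. -/
structure NormalFilterOn (lam : Ordinal.{0}) where
  sets : Set (Set Ordinal.{0})
  subset_field : ∀ A ∈ sets, A ⊆ Set.Iio lam
  superset_mem : ∀ A ∈ sets, ∀ B, B ⊆ Set.Iio lam → A ⊆ B → B ∈ sets
  inter_mem : ∀ A ∈ sets, ∀ B ∈ sets, A ∩ B ∈ sets
  tail_mem : ∀ a, a < lam → {x : Ordinal.{0} | a ≤ x ∧ x < lam} ∈ sets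
  complete : ∀ b, b < lam → ∀ s : Ordinal.{0} → Set Ordinal.{0},
    (∀ i, i < b → s i ∈ sets) → {x : Ordinal.{0} | x < lam ∧ ∀ i, i < b → x ∈ s i} ∈ sets
  diagonal : ∀ s : Ordinal.{0} → Set Ordinal.{0}, (∀ i, i < lam → s i ∈ sets) →
    {x : Ordinal.{0} | x < lam ∧ ∀ i, i < x → x ∈ s i} ∈ sets
  proper : ∅ ∉ sets

/-- `A` is `D`-positive, i.e. `A ∈ D⁺`. -/
def NormalFilterOn.pos {lam : Ordinal.{0}} (D : NormalFilterOn lam) (A : Set Ordinal.{0}) : Prop :=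
  A ⊆ Set.Iio lam ∧ (Set.Iio lam \ A) ∉ D.sets

/-- `A` has cardinality at most `|c|` (it injects into the ordinals below `c`). -/
def SizeLE {α : Type*} (A : Set α) (c : Ordinal.{0}) : Prop :=
  ∃ g : α → Ordinal.{0}, (∀ x ∈ A, g x < c) ∧ ∀ x ∈ A, ∀ y ∈ A, g x = g y → x = y

/-- `A` has cardinality less than `|c|`. -/
def SizeLT {α : Type*} (A : Set α) (c : Ordinal.{0}) : Prop :=
  ∃ b, b < c ∧ SizeLE A b

/-- `⟨A i : i < i0⟩` is a maximal antichain of `D⁺`. -/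
def IsMaxAntichainPos {lam : Ordinal.{0}} (D : NormalFilterOn lam) (i0 : Ordinal.{0})
    (A : Ordinal.{0} → Set Ordinal.{0}) : Prop :=
  (∀ i, i < i0 → D.pos (A i)) ∧
  (∀ i, i < i0 → ∀ j, j < i0 → i ≠ j → ¬ D.pos (A i ∩ A j)) ∧
  (∀ B, D.pos B → ∃ i, i < i0 ∧ D.pos (B ∩ A i))

/-- A family of sets forming a maximal antichain of `D⁺`. -/
def IsMaxAntichainSet {lam : Ordinal.{0}} (D : NormalFilterOn lam) (S : Set (Set Ordinal.{0})) : Prop :=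
  (∀ A ∈ S, D.pos A) ∧
  (∀ A ∈ S, ∀ B ∈ S, A ≠ B → ¬ D.pos (A ∩ B)) ∧
  (∀ B, D.pos B → ∃ A ∈ S, D.pos (B ∩ A))

/-- `D` is `kappa`-presaturated (Definition 1.2):  given fewer than `kappa` many
maximal antichains of `D⁺` and a positive `B`, some positive `A* ⊆ B` meets at
most `lam` many members of each antichain positively. -/
def Presaturated {lam : Ordinal.{0}} (D : NormalFilterOn lam) (kappa : Ordinal.{0}) : Prop :=
  ∀ k0, k0 < kappa →
    ∀ (idx : Ordinal.{0} → Ordinal.{0}) (A : Ordinal.{0} → Ordinal.{0} → Set Ordinal.{0}),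
      (∀ a, a < k0 → IsMaxAntichainPos D (idx a) (A a)) →
      ∀ B, D.pos B → ∃ Astar, D.pos Astar ∧ Astar ⊆ B ∧
        ∀ a, a < k0 → SizeLE {i : Ordinal.{0} | i < idx a ∧ D.pos (Astar ∩ A a i)} lam

/-! ## Clubs and stationary sets -/

/-- `c` is closed and unbounded in `d`. -/
def ClubIn (c : Set Ordinal.{0}) (d : Ordinal.{0}) : Prop :=
  (∀ b, b < d → ∃ i, i ∈ c ∧ b < i ∧ i < d) ∧
  (∀ x, x < d → x ≠ 0 → (∀ b, b < x → ∃ i, i ∈ c ∧ b < i ∧ i < x) → x ∈ c)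

/-- `A` is stationary in `d`. -/
def StatIn (A : Set Ordinal.{0}) (d : Ordinal.{0}) : Prop :=
  ∀ c, ClubIn c d → ∃ i, i ∈ c ∧ i ∈ A ∧ i < d

/-! ## Forcing notions, names for sets of ordinals, and the forcing relation
(dense-set semantics).  `le p q` means that `q` extends (is stronger than) `p`. -/

structure ForcingNotion where
  Cond : Type 1
  le : Cond → Cond → Prop
  le_refl : ∀ p, le p p
  le_trans : ∀ {p q r}, le p q → le q r → le p r
  one : Cond
  one_le : ∀ p, le one p

/-- A name for a set of ordinals: `σ i` is the set of conditions forcing `i ∈ σ`. -/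
def SetName (P : ForcingNotion) : Type 1 := Ordinal.{0} → Set P.Cond

def IsSetName (P : ForcingNotion) (σ : SetName P) : Prop :=
  ∀ i p q, p ∈ σ i → P.le p q → q ∈ σ i

/-- `q ⊩ i ∈ σ`. -/
def ForcesMem (P : ForcingNotion) (q : P.Cond) (σ : SetName P) (i : Ordinal.{0}) : Prop :=
  ∀ r, P.le q r → ∃ s, P.le r s ∧ s ∈ σ i

/-- `q ⊩ i ∉ σ`. -/
def ForcesNotMem (P : ForcingNotion) (q : P.Cond) (σ : SetName P) (i : Ordinal.{0}) : Prop :=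
  ∀ r, P.le q r → r ∉ σ i

/-- The canonical name of a ground-model set of ordinals. -/
def groundName (P : ForcingNotion) (A : Set Ordinal.{0}) : SetName P := fun i => {_s | i ∈ A}

/-- The name of the intersection of two names. -/
def interName (P : ForcingNotion) (σ τ : SetName P) : SetName P :=
  fun i => {s | ForcesMem P s σ i ∧ ForcesMem P s τ i}

/-- `q ⊩ σ ∈ (D^Q)⁺`, where `D^Q` is the filter that `D` generates in `V^Q`. -/
def ForcesPos {lam : Ordinal.{0}} (P : ForcingNotion) (D : NormalFilterOn lam)
    (q : P.Cond) (σ : SetName P) : Prop :=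
  ∀ C ∈ D.sets, ∀ r, P.le q r → ∃ s, P.le r s ∧ ∃ i ∈ C, ForcesMem P s σ i

/-- `q ⊩ σ = ∅ mod D^Q` (equivalently `q ⊩ σ ∉ (D^Q)⁺`). -/
def ForcesNotPos {lam : Ordinal.{0}} (P : ForcingNotion) (D : NormalFilterOn lam)
    (q : P.Cond) (σ : SetName P) : Prop :=
  ∀ r, P.le q r → ∃ s, P.le r s ∧ ∃ C ∈ D.sets, ∀ i ∈ C, ForcesNotMem P s σ i

/-- `q ⊩ σ ⊆ τ`. -/
def ForcesSubset (P : ForcingNotion) (q : P.Cond) (σ τ : SetName P) : Prop :=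
  ∀ i t, P.le q t → ForcesMem P t σ i → ForcesMem P t τ i

/-- `q ⊩ σ ⊆ τ mod D^Q`. -/
def ForcesSubsetMod {lam : Ordinal.{0}} (P : ForcingNotion) (D : NormalFilterOn lam)
    (q : P.Cond) (σ τ : SetName P) : Prop :=
  ∀ r, P.le q r → ∃ s, P.le r s ∧ ∃ C ∈ D.sets,
    ∀ i ∈ C, ∀ t, P.le s t → ForcesMem P t σ i → ForcesMem P t τ i

/-! ## Forced maximal antichains, and presaturation of `D^Q` in `V^Q` -/

/-- `q` forces that `⟨A i : i < idx⟩` is a maximal antichain of `(D^Q)⁺`. -/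
def ForcedMaxAntichain {lam : Ordinal.{0}} (P : ForcingNotion) (D : NormalFilterOn lam)
    (q : P.Cond) (idx : Ordinal.{0}) (A : Ordinal.{0} → SetName P) : Prop :=
  (∀ i, i < idx → ForcesPos P D q (A i)) ∧
  (∀ i, i < idx → ∀ j, j < idx → i ≠ j → ForcesNotPos P D q (interName P (A i) (A j))) ∧
  (∀ B : SetName P, ∀ r, P.le q r → ForcesPos P D r B →
    ∃ s, P.le r s ∧ ∃ i, i < idx ∧ ForcesPos P D s (interName P (A i) B))

/-- `D^Q` is `kappa`-presaturated in `V^Q`. -/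
def ForcedPresaturated {lam : Ordinal.{0}} (P : ForcingNotion) (D : NormalFilterOn lam)
    (kappa : Ordinal.{0}) : Prop :=
  ∀ (q : P.Cond) (k0 : Ordinal.{0}), k0 < kappa →
    ∀ (idx : Ordinal.{0} → Ordinal.{0}) (A : Ordinal.{0} → Ordinal.{0} → SetName P),
      (∀ a, a < k0 → ForcedMaxAntichain P D q (idx a) (A a)) →
      ∀ B : SetName P, ForcesPos P D q B →
        ∀ r, P.le q r → ∃ s, P.le r s ∧ ∃ Astar : SetName P,
          ForcesPos P D s Astar ∧ ForcesSubsetMod P D s Astar B ∧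
          ∀ a, a < k0 → ∃ Y : Set Ordinal.{0}, SizeLE Y lam ∧
            ∀ i, i < idx a → i ∉ Y → ForcesNotPos P D s (interName P Astar (A a i))

/-! ## Completeness of forcings, names of functions, preservation of cardinals -/

/-- `P` is `kappa`-complete (`kappa`-closed): increasing chains of length `< kappa`
have upper bounds. -/
def KappaClosed (P : ForcingNotion) (kappa : Ordinal.{0}) : Prop :=
  ∀ d, d < kappa → ∀ c : Ordinal.{0} → P.Cond,
    (∀ i j, i ≤ j → j < d → P.le (c i) (c j)) → ∃ ub, ∀ i, i < d → P.le (c i) ub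

/-- `F` is (below `q`) a name of a function with domain `mu`:
`F x i` is the set of conditions forcing the value at `x` to be `i`. -/
def IsFunName (P : ForcingNotion) (q : P.Cond) (mu : Ordinal.{0})
    (F : Ordinal.{0} → Ordinal.{0} → Set P.Cond) : Prop :=
  (∀ x i p r, p ∈ F x i → P.le p r → r ∈ F x i) ∧
  (∀ x, x < mu → ∀ r, P.le q r → ∃ s, P.le r s ∧ ∃ i, s ∈ F x i) ∧
  (∀ x i j s, s ∈ F x i → s ∈ F x j → i = j)

/-- `q` forces `F` to be a function from `mu` cofinally into `lam`. -/
def ForcesCofinalInto (P : ForcingNotion) (q : P.Cond) (mu lam : Ordinal.{0})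
    (F : Ordinal.{0} → Ordinal.{0} → Set P.Cond) : Prop :=
  IsFunName P q mu F ∧ (∀ x i s, s ∈ F x i → i < lam) ∧
  (∀ b, b < lam → ∀ r, P.le q r → ∃ s, P.le r s ∧ ∃ x, x < mu ∧ ∃ i, b ≤ i ∧ s ∈ F x i)

/-- `⊩_P "lam is regular"`. -/
def ForcesRegular (P : ForcingNotion) (lam : Ordinal.{0}) : Prop :=
  ∀ q mu F, mu < lam → ¬ ForcesCofinalInto P q mu lam F

/-- `q` forces `F` to be a surjection from `mu` onto `nu`. -/
def ForcesOnto (P : ForcingNotion) (q : P.Cond) (mu nu : Ordinal.{0})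
    (F : Ordinal.{0} → Ordinal.{0} → Set P.Cond) : Prop :=
  IsFunName P q mu F ∧ (∀ x i s, s ∈ F x i → i < nu) ∧
  (∀ i, i < nu → ∀ r, P.le q r → ∃ s, P.le r s ∧ ∃ x, x < mu ∧ s ∈ F x i)

/-- `⊩_P "nu remains a cardinal"`. -/
def PreservesCardinalForced (P : ForcingNotion) (nu : Ordinal.{0}) : Prop :=
  ∀ q mu F, mu < nu → ¬ ForcesOnto P q mu nu F

/-! ## Forced clubs and stationarity -/

/-- `q` forces the name `C` to be a club in `d`. -/
def ForcesClubIn (P : ForcingNotion) (q : P.Cond) (C : SetName P) (d : Ordinal.{0}) : Prop :=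
  (∀ b, b < d → ∀ r, P.le q r → ∃ s, P.le r s ∧ ∃ i, b < i ∧ i < d ∧ ForcesMem P s C i) ∧
  (∀ x, x < d → x ≠ 0 → ∀ s, P.le q s →
    (∀ b, b < x → ∀ t, P.le s t → ∃ u, P.le t u ∧ ∃ i, b < i ∧ i < x ∧ ForcesMem P u C i) →
    ForcesMem P s C x)

/-- `q ⊩ "σ is a stationary subset of d"`. -/
def ForcesStatIn (P : ForcingNotion) (q : P.Cond) (σ : SetName P) (d : Ordinal.{0}) : Prop :=
  ∀ r, P.le q r → ∀ C : SetName P, ForcesClubIn P r C d →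
    ∃ s, P.le r s ∧ ∃ i, i < d ∧ ForcesMem P s σ i ∧ ForcesMem P s C i

/-- `q ⊩ "σ ∩ d is nonstationary in d"`. -/
def ForcesNonstatIn (P : ForcingNotion) (q : P.Cond) (σ : SetName P) (d : Ordinal.{0}) : Prop :=
  ∀ r, P.le q r → ∃ s, P.le r s ∧ ∃ C : SetName P, ForcesClubIn P s C d ∧
    ∀ i, i < d → ∀ t, P.le s t → ¬ (ForcesMem P t σ i ∧ ForcesMem P t C i)

/-- `P` preserves stationarity of every `D`-positive set. -/
def PreservesStationarity {lam : Ordinal.{0}} (P : ForcingNotion) (D : NormalFilterOn lam) : Prop :=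
  ∀ A, D.pos A → ∀ q, ForcesStatIn P q (groundName P A) lam

/-! ## The games `Gm(D,γ,a)` and `Gm⁺(D,γ,a)` of Definition 1.7 -/

def restrictPlay (f : Ordinal.{0} → Set Ordinal.{0}) (i : Ordinal.{0}) : Ordinal.{0} → Set Ordinal.{0} :=
  fun j => if j < i then f j else ∅

/-- The move `A` is legal at stage `i` of a play `f`:  it is `D`-positive and
included mod `D` in all previous moves. -/
def LegalMove {lam : Ordinal.{0}} (D : NormalFilterOn lam) (f : Ordinal.{0} → Set Ordinal.{0})
    (i : Ordinal.{0}) (A : Set Ordinal.{0}) : Prop :=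
  D.pos A ∧ ∀ j, j < i → ¬ D.pos (A \ f j)

def LegalBelow {lam : Ordinal.{0}} (D : NormalFilterOn lam) (f : Ordinal.{0} → Set Ordinal.{0})
    (i : Ordinal.{0}) : Prop :=
  ∀ j, j < i → LegalMove D f j (f j)

/-- Player II has a winning strategy in `Gm(D,γ,a)` (player I moves at stages in `a`). -/
def IIWinsGm {lam : Ordinal.{0}} (D : NormalFilterOn lam) (γ : Ordinal.{0}) (a : Set Ordinal.{0}) : Prop :=
  ∃ S : Ordinal.{0} → (Ordinal.{0} → Set Ordinal.{0}) → Set Ordinal.{0},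
    ∀ f : Ordinal.{0} → Set Ordinal.{0},
      (∀ i, i < γ → i ∉ a → f i = S i (restrictPlay f i)) →
      (∀ i, i < γ → i ∈ a → LegalBelow D f i → (∃ A, LegalMove D f i A) →
        LegalMove D f i (f i)) →
      ∀ i, i < γ → LegalBelow D f i → LegalMove D f i (f i)

/-- Player II has a winning strategy in `Gm⁺(D,γ,a)`:  in addition the
intersection of the moves must be nonempty. -/
def IIWinsGmPlus {lam : Ordinal.{0}} (D : NormalFilterOn lam) (γ : Ordinal.{0}) (a : Set Ordinal.{0}) : Prop :=
  ∃ S : Ordinal.{0} → (Ordinal.{0} → Set Ordinal.{0}) → Set Ordinal.{0},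
    ∀ f : Ordinal.{0} → Set Ordinal.{0},
      (∀ i, i < γ → i ∉ a → f i = S i (restrictPlay f i)) →
      (∀ i, i < γ → i ∈ a → LegalBelow D f i → (∃ A, LegalMove D f i A) →
        LegalMove D f i (f i)) →
      (∀ i, i < γ → LegalBelow D f i → LegalMove D f i (f i)) ∧
      ((∀ i, i < γ → LegalMove D f i (f i)) → ∃ x, ∀ i, i < γ → x ∈ f i)

/-- Player I has a winning strategy in `Gm(D,γ,a)`. -/
def IWinsGm {lam : Ordinal.{0}} (D : NormalFilterOn lam) (γ : Ordinal.{0}) (a : Set Ordinal.{0}) : Prop :=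
  ∃ S : Ordinal.{0} → (Ordinal.{0} → Set Ordinal.{0}) → Set Ordinal.{0},
    ∀ f : Ordinal.{0} → Set Ordinal.{0},
      (∀ i, i < γ → i ∈ a → f i = S i (restrictPlay f i)) →
      (∀ i, i < γ → i ∉ a → LegalBelow D f i → (∃ A, LegalMove D f i A) →
        LegalMove D f i (f i)) →
      ∃ i, i < γ ∧ LegalBelow D f i ∧ ¬ LegalMove D f i (f i) ∧
        (i ∈ a → ¬ ∃ A, LegalMove D f i A)

/-- Player I has a winning strategy in `Gm⁺(D,γ,a)`. -/
def IWinsGmPlus {lam : Ordinal.{0}} (D : NormalFilterOn lam) (γ : Ordinal.{0}) (a : Set Ordinal.{0}) : Prop :=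
  ∃ S : Ordinal.{0} → (Ordinal.{0} → Set Ordinal.{0}) → Set Ordinal.{0},
    ∀ f : Ordinal.{0} → Set Ordinal.{0},
      (∀ i, i < γ → i ∈ a → f i = S i (restrictPlay f i)) →
      (∀ i, i < γ → i ∉ a → LegalBelow D f i → (∃ A, LegalMove D f i A) →
        LegalMove D f i (f i)) →
      (∃ i, i < γ ∧ LegalBelow D f i ∧ ¬ LegalMove D f i (f i) ∧
        (i ∈ a → ¬ ∃ A, LegalMove D f i A)) ∨
      ¬ ∃ x, ∀ i, i < γ → x ∈ f i

/-- The default set of stages at which player I moves:  `{1 + 2·i}`. -/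
def oddStages : Set Ordinal.{0} := {i | ∃ j : Ordinal.{0}, i = 1 + 2 * j}

/-! ## The games in the generic extension, rendered via names and conditions -/

def defaultPairMove (P : ForcingNotion) : P.Cond × SetName P := (P.one, fun _ => ∅)

def restrictAux (P : ForcingNotion) (g : Ordinal.{0} → P.Cond × SetName P) (i : Ordinal.{0}) :
    Ordinal.{0} → P.Cond × SetName P :=
  fun j => if j < i then g j else defaultPairMove P

/-- Legality of the decorated move `m = (condition, name)` at stage `i` of the
auxiliary play `g` interpreting the game `Gm(D^Q, …)` of `V^Q` below `q`. -/
def AuxLegal {lam : Ordinal.{0}} (P : ForcingNotion) (D : NormalFilterOn lam) (q : P.Cond)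
    (g : Ordinal.{0} → P.Cond × SetName P) (i : Ordinal.{0}) (m : P.Cond × SetName P) : Prop :=
  P.le q m.1 ∧ (∀ j, j < i → P.le (g j).1 m.1) ∧ ForcesPos P D m.1 m.2 ∧
    ∀ j, j < i → ForcesSubsetMod P D m.1 m.2 ((g j).2)

def AuxLegalBelow {lam : Ordinal.{0}} (P : ForcingNotion) (D : NormalFilterOn lam) (q : P.Cond)
    (g : Ordinal.{0} → P.Cond × SetName P) (i : Ordinal.{0}) : Prop :=
  ∀ j, j < i → AuxLegal P D q g j (g j)

/-- `q ⊩ "player II has a winning strategy in Gm(D^Q,γ,a)"`. -/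
def ForcedIIWinsGm {lam : Ordinal.{0}} (P : ForcingNotion) (D : NormalFilterOn lam)
    (γ : Ordinal.{0}) (a : Set Ordinal.{0}) (q : P.Cond) : Prop :=
  ∃ S : Ordinal.{0} → (Ordinal.{0} → P.Cond × SetName P) → P.Cond × SetName P,
    ∀ g : Ordinal.{0} → P.Cond × SetName P,
      (∀ i, i < γ → i ∉ a → g i = S i (restrictAux P g i)) →
      (∀ i, i < γ → i ∈ a → AuxLegalBelow P D q g i → (∃ m, AuxLegal P D q g i m) →
        AuxLegal P D q g i (g i)) →
      ∀ i, i < γ → AuxLegalBelow P D q g i → AuxLegal P D q g i (g i)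

/-- `q ⊩ "player II has a winning strategy in Gm⁺(D^Q,γ,a)"`. -/
def ForcedIIWinsGmPlus {lam : Ordinal.{0}} (P : ForcingNotion) (D : NormalFilterOn lam)
    (γ : Ordinal.{0}) (a : Set Ordinal.{0}) (q : P.Cond) : Prop :=
  ∃ S : Ordinal.{0} → (Ordinal.{0} → P.Cond × SetName P) → P.Cond × SetName P,
    ∀ g : Ordinal.{0} → P.Cond × SetName P,
      (∀ i, i < γ → i ∉ a → g i = S i (restrictAux P g i)) →
      (∀ i, i < γ → i ∈ a → AuxLegalBelow P D q g i → (∃ m, AuxLegal P D q g i m) →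
        AuxLegal P D q g i (g i)) →
      (∀ i, i < γ → AuxLegalBelow P D q g i → AuxLegal P D q g i (g i)) ∧
      ((∀ i, i < γ → AuxLegal P D q g i (g i)) →
        ∃ s, (∀ j, j < γ → P.le (g j).1 s) ∧ ∃ x, ∀ j, j < γ → ForcesMem P s ((g j).2) x)

/-- `q ⊩ "player I has a winning strategy in Gm(D^Q,γ,a)"`. -/
def ForcedIWinsGm {lam : Ordinal.{0}} (P : ForcingNotion) (D : NormalFilterOn lam)
    (γ : Ordinal.{0}) (a : Set Ordinal.{0}) (q : P.Cond) : Prop :=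
  ∃ S : Ordinal.{0} → (Ordinal.{0} → P.Cond × SetName P) → P.Cond × SetName P,
    ∀ g : Ordinal.{0} → P.Cond × SetName P,
      (∀ i, i < γ → i ∈ a → g i = S i (restrictAux P g i)) →
      (∀ i, i < γ → i ∉ a → AuxLegalBelow P D q g i → (∃ m, AuxLegal P D q g i m) →
        AuxLegal P D q g i (g i)) →
      ∃ i, i < γ ∧ AuxLegalBelow P D q g i ∧ ¬ AuxLegal P D q g i (g i) ∧
        (i ∈ a → ¬ ∃ m, AuxLegal P D q g i m)

/-- `q ⊩ "player I has a winning strategy in Gm⁺(D^Q,γ,a)"`. -/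
def ForcedIWinsGmPlus {lam : Ordinal.{0}} (P : ForcingNotion) (D : NormalFilterOn lam)
    (γ : Ordinal.{0}) (a : Set Ordinal.{0}) (q : P.Cond) : Prop :=
  ∃ S : Ordinal.{0} → (Ordinal.{0} → P.Cond × SetName P) → P.Cond × SetName P,
    ∀ g : Ordinal.{0} → P.Cond × SetName P,
      (∀ i, i < γ → i ∈ a → g i = S i (restrictAux P g i)) →
      (∀ i, i < γ → i ∉ a → AuxLegalBelow P D q g i → (∃ m, AuxLegal P D q g i m) →
        AuxLegal P D q g i (g i)) →
      (∃ i, i < γ ∧ AuxLegalBelow P D q g i ∧ ¬ AuxLegal P D q g i (g i) ∧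
        (i ∈ a → ¬ ∃ m, AuxLegal P D q g i m)) ∨
      ¬ ∃ s, (∀ j, j < γ → P.le (g j).1 s) ∧ ∃ x, ∀ j, j < γ → ForcesMem P s ((g j).2) x

/-! ## Systems of conditions indexed by positive sets: the principles
`(*)³`, `(*)⁴`, `(*)⁶`, `(*)⁷` -/

/-- A sequence of conditions `p̄ = ⟨p_i : i ∈ T⟩` (first component: `T`). -/
def PSeq (P : ForcingNotion) : Type 1 := Set Ordinal.{0} × (Ordinal.{0} → P.Cond)

/-- The name `τ_p̄ = {i ∈ T : p_i ∈ G}`. -/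
def tauOf (P : ForcingNotion) (x : PSeq P) : SetName P :=
  fun i => {s | i ∈ x.1 ∧ P.le (x.2 i) s}

/-- `y` extends `x` in `K`:  `T_y ⊆ T_x` and `y` is coordinatewise stronger. -/
def KLe (P : ForcingNotion) (x y : PSeq P) : Prop :=
  y.1 ⊆ x.1 ∧ ∀ i ∈ y.1, P.le (x.2 i) (y.2 i)

/-- The principle `(*)³_{D,K,Q}` of Proposition 1.10. -/
def StarThree {lam : Ordinal.{0}} (P : ForcingNotion) (D : NormalFilterOn lam)
    (K : Set (PSeq P)) (kappa : Ordinal.{0}) : Prop :=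
  (∀ x ∈ K, D.pos x.1) ∧
  (∀ x ∈ K, ¬ ForcesNotPos P D P.one (tauOf P x)) ∧
  (∀ x ∈ K, ∀ T : SetName P, IsSetName P T →
      ¬ ForcesNotPos P D P.one (interName P T (tauOf P x)) →
      ∃ y ∈ K, KLe P x y ∧ ForcesSubset P P.one (tauOf P y) T) ∧
  ((∀ d, d < kappa → ∀ c : Ordinal.{0} → PSeq P, (∀ b, b < d → c b ∈ K) →
      (∀ b b', b ≤ b' → b' < d → KLe P (c b) (c b')) →
      D.pos {i : Ordinal.{0} | i < lam ∧ ∀ b, b < d → i ∈ (c b).1} →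
      ∃ y ∈ K, ∀ b, b < d → KLe P (c b) y) ∨
   (∀ d, d < kappa → ∀ c : Ordinal.{0} → PSeq P, (∀ b, b < d → c b ∈ K) →
      (∀ b b' i, b ≤ b' → b' < d → i ∈ (c b).1 → i ∈ (c b').1 →
        P.le ((c b).2 i) ((c b').2 i)) →
      D.pos {i : Ordinal.{0} | i < lam ∧ ∀ b, b < d → i ∈ (c b).1} →
      ∃ y ∈ K, y.1 ⊆ {i : Ordinal.{0} | i < lam ∧ ∀ b, b < d → i ∈ (c b).1} ∧
        ∀ b, b < d → ∀ i, i ∈ (c b).1 → i ∈ y.1 → P.le ((c b).2 i) (y.2 i))) ∧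
  (∀ (q : P.Cond) (τ : SetName P), IsSetName P τ → ForcesPos P D q τ →
      ∃ x ∈ K, (∀ i ∈ x.1, P.le q (x.2 i)) ∧ ForcesSubset P q (tauOf P x) τ) ∧
  ((Set.Iio lam, fun _ : Ordinal.{0} => P.one) ∈ K)

/-- The principle `(*)⁴_{D,K,Q}`. -/
def StarFour {lam : Ordinal.{0}} (P : ForcingNotion) (D : NormalFilterOn lam)
    (K : Set (PSeq P)) (kappa : Ordinal.{0}) : Prop :=
  StarThree P D K kappa ∧ ∀ x ∈ K, ∀ i ∈ x.1, ForcesPos P D (x.2 i) (tauOf P x)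

/-- The principle `(*)⁶_{D,K,Q}` of Proposition 1.11. -/
def StarSix {lam : Ordinal.{0}} (P : ForcingNotion) (D : NormalFilterOn lam)
    (K : Set (PSeq P)) : Prop :=
  (∀ x ∈ K, D.pos x.1) ∧
  (∀ (q : P.Cond) (T : Set Ordinal.{0}), D.pos T →
      ∃ x ∈ K, (∀ i, P.le q (x.2 i)) ∧ x.1 ⊆ T) ∧
  (∀ x ∈ K, ∀ i ∈ x.1, ForcesPos P D (x.2 i) (tauOf P x)) ∧
  (∀ x ∈ K, ∀ T', T' ⊆ x.1 → D.pos T' → ∀ qf : Ordinal.{0} → P.Cond,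
      (∀ i ∈ T', P.le (x.2 i) (qf i)) →
      ∃ y ∈ K, y.1 ⊆ T' ∧ ∀ i ∈ y.1, P.le (qf i) (y.2 i)) ∧
  (∀ (q : P.Cond) (τ : SetName P), IsSetName P τ → ForcesPos P D q τ →
      ∃ x ∈ K, (∀ i ∈ x.1, P.le q (x.2 i)) ∧ ForcesSubset P q (tauOf P x) τ) ∧
  ((Set.Iio lam, fun _ : Ordinal.{0} => P.one) ∈ K)

def Incompatible (P : ForcingNotion) (p q : P.Cond) : Prop := ¬ ∃ r, P.le p r ∧ P.le q r

/-- `P` satisfies the `lam`-c.c. -/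
def LamCC (P : ForcingNotion) (lam : Ordinal.{0}) : Prop :=
  ∀ A : Set P.Cond, (∀ p ∈ A, ∀ q ∈ A, p ≠ q → Incompatible P p q) → SizeLT A lam

/-- The principle `(*)⁷_{D,K,D₁,Q}` of Proposition 1.12. -/
def StarSeven {lam : Ordinal.{0}} (P : ForcingNotion) (D D1 : NormalFilterOn lam)
    (K : Set (PSeq P)) (kappa : Ordinal.{0}) : Prop :=
  (StarSix P D K ∨ StarThree P D K kappa) ∧
  ((∀ x ∈ K, D1.pos {d : Ordinal.{0} | d < lam ∧ ForcesStatIn P P.one (tauOf P x) d}) ∨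
   ((∀ x ∈ K, D1.pos {d : Ordinal.{0} | d < lam ∧ ¬ ForcesNonstatIn P P.one (tauOf P x) d}) ∧
     LamCC P lam))

/-- The principle `C_{D,D₁}` of Proposition 1.12. -/
def CDPrinciple {lam : Ordinal.{0}} (D D1 : NormalFilterOn lam) : Prop :=
  ∀ T, D.pos T → D1.pos {d : Ordinal.{0} | d < lam ∧ StatIn T d}

/-! ## The Levy collapse `Col(μ,<λ)` -/

structure IsLevyCond (mu lam : Ordinal.{0}) (f : Set (Ordinal.{0} × Ordinal.{0} × Ordinal.{0})) : Prop where
  func : ∀ a x b b', (a, x, b) ∈ f → (a, x, b') ∈ f → b = b'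
  dom_lt : ∀ a x b, (a, x, b) ∈ f → a < lam ∧ x < mu
  val_lt : ∀ a x b, (a, x, b) ∈ f → b < a
  small : f = ∅ ∨ SizeLT f mu

/-- The Levy collapse `Col(mu, <lam)`:  partial functions of size `< mu` on
`lam × mu` with `p(a,x) < a`, ordered by extension. -/
def LevyCollapse (mu lam : Ordinal.{0}) : ForcingNotion where
  Cond := {f : Set (Ordinal.{0} × Ordinal.{0} × Ordinal.{0}) // IsLevyCond mu lam f}
  le f g := f.1 ⊆ g.1
  le_refl _ := subset_rfl
  le_trans h1 h2 := h1.trans h2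
  one := ⟨∅, { func := fun _ _ _ _ h => absurd h (Set.notMem_empty _),
               dom_lt := fun _ _ _ h => absurd h (Set.notMem_empty _),
               val_lt := fun _ _ _ h => absurd h (Set.notMem_empty _),
               small := Or.inl rfl }⟩
  one_le _ := Set.empty_subset _

/-! ## Forcing with the positive sets of an ideal;  precipitousness
(well-foundedness of generic ultrapowers) and closure of generic ultrapowers -/

/-- Forcing with the `Pos`-positive subsets of `T`, ordered by inclusion. -/
def PosForcing (Pos : Set (Set Ordinal.{0})) (T : Set Ordinal.{0}) : ForcingNotion where
  Cond := {A : Set Ordinal.{0} // A = T ∨ (A ∈ Pos ∧ A ⊆ T)}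
  le A B := B.1 ⊆ A.1
  le_refl _ := subset_rfl
  le_trans h1 h2 := h2.trans h1
  one := ⟨T, Or.inl rfl⟩
  one_le p := by
    rcases p.2 with h | h
    · exact h.subset
    · exact h.2

/-- A name for an element of the generic ultrapower: a name of a ground-model
function (on ordinals). -/
def FnName (P : ForcingNotion) : Type 1 := (Ordinal.{0} → Ordinal.{0}) → Set P.Cond

def IsFnNameAbove (P : ForcingNotion) (q : P.Cond) (N : FnName P) : Prop :=
  (∀ g p r, p ∈ N g → P.le p r → r ∈ N g) ∧
  (∀ r, P.le q r → ∃ s, P.le r s ∧ ∃ g, s ∈ N g) ∧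
  (∀ g g' s, s ∈ N g → s ∈ N g' → g = g')

/-- The ideal with positive sets `Pos` (on the underlying set `T`) is
precipitous: no condition forces an infinite descending sequence in the
generic ultrapower. -/
def IdealPrecipitous (Pos : Set (Set Ordinal.{0})) (T : Set Ordinal.{0}) : Prop :=
  ¬ ∃ (q : (PosForcing Pos T).Cond) (N : ℕ → FnName (PosForcing Pos T)),
      (∀ n, IsFnNameAbove (PosForcing Pos T) q (N n)) ∧
      ∀ n, ∀ r, (PosForcing Pos T).le q r → ∃ s, (PosForcing Pos T).le r s ∧
        ∃ g g' : Ordinal.{0} → Ordinal.{0}, s ∈ N n g ∧ s ∈ N (n + 1) g' ∧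
          (s.1 ∩ {a : Ordinal.{0} | ¬ g' a < g a}) ∉ Pos

/-- The (well-founded) generic ultrapower is closed under sequences of length
`< kappa` of its elements in the generic extension. -/
def IdealUltraClosed (Pos : Set (Set Ordinal.{0})) (T : Set Ordinal.{0}) (kappa : Ordinal.{0}) : Prop :=
  ∀ (q : (PosForcing Pos T).Cond) (d : Ordinal.{0}), d < kappa →
    ∀ N : Ordinal.{0} → FnName (PosForcing Pos T),
      (∀ x, x < d → IsFnNameAbove (PosForcing Pos T) q (N x)) →
      ∀ r, (PosForcing Pos T).le q r → ∃ s, (PosForcing Pos T).le r s ∧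
        ∃ F : Ordinal.{0} → Ordinal.{0} → Ordinal.{0},
          ∀ x, x < d → ∀ t, (PosForcing Pos T).le s t →
            ∃ u, (PosForcing Pos T).le t u ∧ ∃ g, u ∈ N x g ∧
              (u.1 ∩ {a : Ordinal.{0} | F a x ≠ g a}) ∉ Pos

/-- Forcing with the positive sets preserves the cardinal `nu`. -/
def IdealPreservesCardinal (Pos : Set (Set Ordinal.{0})) (T : Set Ordinal.{0}) (nu : Ordinal.{0}) : Prop :=
  PreservesCardinalForced (PosForcing Pos T) nu

/-- The ideal is `nu`-preserving: precipitous, and forcing with the positive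
sets preserves the cardinal `nu` (Definition 1.4). -/
def IdealKappaPreserving (Pos : Set (Set Ordinal.{0})) (T : Set Ordinal.{0}) (nu : Ordinal.{0}) : Prop :=
  IdealPrecipitous Pos T ∧ IdealPreservesCardinal Pos T nu

/-! ## The nonstationary ideal and its cofinality restrictions -/

/-- The `NS_lam`-positive sets: the stationary subsets of `lam`. -/
def NSPos (lam : Ordinal.{0}) : Set (Set Ordinal.{0}) := {A | A ⊆ Set.Iio lam ∧ StatIn A lam}

def cofSet (lam : Ordinal.{0}) (m : Cardinal) : Set Ordinal.{0} := {x | x < lam ∧ x.cof = m}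

/-- The `NS_lam^m`-positive sets: stationary sets concentrating on cofinality `m`. -/
def NSPosCof (lam : Ordinal.{0}) (m : Cardinal) : Set (Set Ordinal.{0}) :=
  {A | A ⊆ cofSet lam m ∧ StatIn A lam}

/-! ## Repeat points and (abstract) core-model data -/

/-- `δ` is an up-repeat point for the sequence `⟨F β : β < γ⟩` (Definition 2.0(a)). -/
def IsUpRepeatPoint (F : Ordinal.{0} → Set (Set Ordinal.{0})) (γ δ : Ordinal.{0}) : Prop :=
  δ < γ ∧ ∀ A ∈ F δ, ∃ δ', δ < δ' ∧ δ' < γ ∧ A ∈ F δ'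

/-- `δ` is a `(lam, ρ)`-repeat point for `⟨F β : β < γ⟩` (Definition 2.0(b)). -/
def IsRepeatPoint (F : Ordinal.{0} → Set (Set Ordinal.{0})) (γ : Ordinal.{0}) (lam : Cardinal)
    (ρ δ : Ordinal.{0}) : Prop :=
  δ < γ ∧ δ.cof = lam ∧ ∀ A : Set Ordinal.{0},
    (∀ b, δ ≤ b → b < δ + ρ → A ∈ F b) →
    ∀ c, c < δ → ∃ ξ, c ≤ ξ ∧ ξ < δ ∧ ∀ ξ', ξ ≤ ξ' → ξ' < ξ + ρ → A ∈ F ξ'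

/-- `U` is a normal ultrafilter over `a`. -/
def IsNormalUltrafilterOn (a : Ordinal.{0}) (U : Set (Set Ordinal.{0})) : Prop :=
  (∃ D : NormalFilterOn a, D.sets = U) ∧
  ∀ X, X ⊆ Set.Iio a → X ∈ U ∨ (Set.Iio a \ X) ∈ U

/-- Abstract data for (the maximal sequence of measures `F⃗` of) the core model
`K(F⃗)`: the Mitchell order `o`, the measure sequence `seq`, and the predicate
"regular in `K(F⃗)`". -/
structure CoreModelData where
  o : Ordinal.{0} → Ordinal.{0}
  seq : Ordinal.{0} → Ordinal.{0} → Set (Set Ordinal.{0})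
  regularIn : Ordinal.{0} → Prop

/-! ### Auxiliary lemmas about normal filters -/

section NFaux

variable {lam : Ordinal.{0}} (D : NormalFilterOn lam)

lemma NFaux.univ_mem (h0 : 0 < lam) : Set.Iio lam ∈ D.sets := by
  have h := D.tail_mem 0 h0
  have he : {x : Ordinal.{0} | 0 ≤ x ∧ x < lam} = Set.Iio lam := by
    ext x; simp [zero_le]
  rwa [he] at h

lemma NFaux.pos_nonempty (h0 : 0 < lam) {S : Set Ordinal.{0}} (hS : D.pos S) : S.Nonempty := by
  rcases Set.eq_empty_or_nonempty S with h | h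
  · exact absurd (by rw [h, Set.diff_empty]; exact NFaux.univ_mem D h0) hS.2
  · exact h

lemma NFaux.not_pos {S : Set Ordinal.{0}} (hsub : S ⊆ Set.Iio lam) (h : ¬ D.pos S) :
    Set.Iio lam \ S ∈ D.sets := by
  by_contra h'; exact h ⟨hsub, h'⟩

lemma NFaux.pos_inter {S C : Set Ordinal.{0}} (hS : D.pos S) (hC : C ∈ D.sets) :
    D.pos (S ∩ C) := by
  refine ⟨fun x hx => hS.1 hx.1, fun h => ?_⟩
  apply hS.2
  have h2 := D.inter_mem _ h _ hC
  refine D.superset_mem _ h2 _ (fun x hx => hx.1) ?_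
  rintro x ⟨⟨hx1, hx2⟩, hx3⟩
  exact ⟨hx1, fun hxs => hx2 ⟨hxs, hx3⟩⟩

lemma NFaux.pos_superset {S T : Set Ordinal.{0}} (hS : D.pos S) (hsub : S ⊆ T)
    (hT : T ⊆ Set.Iio lam) : D.pos T := by
  refine ⟨hT, fun h => hS.2 ?_⟩
  exact D.superset_mem _ h _ (fun x hx => hx.1)
    (fun x hx => ⟨hx.1, fun hxs => hx.2 (hsub hxs)⟩)

/-- Fodor-type lemma for normal filters: a regressive function on a positive
set is constant on a positive set. -/
lemma NFaux.fodor (h0 : 0 < lam) {S : Set Ordinal.{0}} (hS : D.pos S)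
    (f : Ordinal.{0} → Ordinal.{0}) (hf : ∀ x ∈ S, f x < x) :
    ∃ ζ, D.pos {x | x ∈ S ∧ f x = ζ} := by
  by_contra h
  push_neg at h
  have hmem : ∀ ζ, Set.Iio lam \ {x | x ∈ S ∧ f x = ζ} ∈ D.sets := fun ζ =>
    NFaux.not_pos D (fun x hx => hS.1 hx.1) (h ζ)
  have hΔ := D.diagonal (fun ζ => Set.Iio lam \ {x | x ∈ S ∧ f x = ζ}) (fun ζ _ => hmem ζ)
  obtain ⟨x, hxS, hxΔ⟩ := NFaux.pos_nonempty D h0 (NFaux.pos_inter D hS hΔ)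
  exact (hxΔ.2 (f x) (hf x hxS)).2 ⟨hxS, rfl⟩

/-- Pigeonhole lemma: a function on a positive set whose (image of the) range
injects into fewer than `lam` ordinals is constant on a positive set. -/
lemma NFaux.pigeonhole (h0 : 0 < lam) {β : Type*} {S : Set Ordinal.{0}} (hS : D.pos S)
    (H : Ordinal.{0} → β) (b : Ordinal.{0}) (hb : b < lam)
    (j : β → Ordinal.{0}) (hj1 : ∀ x ∈ S, j (H x) < b)
    (hj2 : ∀ x ∈ S, ∀ y ∈ S, j (H x) = j (H y) → H x = H y) :
    ∃ t, D.pos {x | x ∈ S ∧ H x = t} := by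
  by_contra h
  push_neg at h
  have hmem : ∀ e, Set.Iio lam \ {x | x ∈ S ∧ j (H x) = e} ∈ D.sets := by
    intro e
    rcases Set.eq_empty_or_nonempty {x | x ∈ S ∧ j (H x) = e} with he | ⟨x0, hx0⟩
    · rw [he, Set.diff_empty]; exact NFaux.univ_mem D h0
    · have h1 : Set.Iio lam \ {x | x ∈ S ∧ H x = H x0} ∈ D.sets :=
        NFaux.not_pos D (fun x hx => hS.1 hx.1) (h _)
      refine D.superset_mem _ h1 _ (fun x hx => hx.1) ?_
      rintro x ⟨hx1, hx2⟩
      refine ⟨hx1, ?_⟩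
      rintro ⟨hxS, hxe⟩
      exact hx2 ⟨hxS, hj2 x hxS x0 hx0.1 (hxe.trans hx0.2.symm)⟩
  have hC := D.complete b hb (fun e => Set.Iio lam \ {x | x ∈ S ∧ j (H x) = e})
    (fun e _ => hmem e)
  obtain ⟨x, hxS, hxC⟩ := NFaux.pos_nonempty D h0 (NFaux.pos_inter D hS hC)
  exact (hxC.2 (j (H x)) (hj1 x hxS)).2 ⟨hxS, rfl⟩

end NFaux

/-! ### Statement 0 (Fact 1.3) -/

/-- Let `κ < λ` be regular cardinals with `θ^κ < λ` for every `θ < λ`, and let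
`D` be a normal filter on `λ` that is `κ`-presaturated and satisfies
`{i < λ : cf i ≥ κ} ∈ D`.  Then for every `κ₀ < κ`, every family of maximal
antichains `I_a = {A_i^a : i < i_a}` of `D⁺` (`a < κ₀`), and every `B ∈ D⁺`,
there is `A** ∈ D⁺`, `A** ⊆ B`, such that for every `a < κ₀` there is exactly
one `i < i_a` with `A** ∩ A_i^a ∈ D⁺`. -/
theorem fact_1_3 (kappa lam : Cardinal) (hkreg : kappa.IsRegular) (hlreg : lam.IsRegular)
    (hkl : kappa < lam) (hpow : ∀ θ : Cardinal, θ < lam → θ ^ kappa < lam)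
    (D : NormalFilterOn lam.ord)
    (hcof : {i : Ordinal.{0} | i < lam.ord ∧ kappa ≤ i.cof} ∈ D.sets)
    (hpresat : Presaturated D kappa.ord)
    (k0 : Ordinal.{0}) (hk0 : k0 < kappa.ord)
    (idx : Ordinal.{0} → Ordinal.{0}) (A : Ordinal.{0} → Ordinal.{0} → Set Ordinal.{0})
    (hA : ∀ a, a < k0 → IsMaxAntichainPos D (idx a) (A a))
    (B : Set Ordinal.{0}) (hB : D.pos B) :
    ∃ Astar : Set Ordinal.{0}, D.pos Astar ∧ Astar ⊆ B ∧
      ∀ a, a < k0 → ∃! i : Ordinal.{0}, i < idx a ∧ D.pos (Astar ∩ A a i) := by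
  classical
  have hlaleph : ℵ₀ ≤ lam := hlreg.aleph0_le
  have hlim : Order.IsSuccLimit lam.ord := Cardinal.isSuccLimit_ord hlaleph
  have h0 : (0 : Ordinal.{0}) < lam.ord := hlim.pos
  have hk0lam : k0 < lam.ord := hk0.trans (Cardinal.ord_lt_ord.mpr hkl)
  obtain ⟨Astar, hAstarPos, hAstarB, hsize⟩ := hpresat k0 hk0 idx A hA B hB
  set Y : Ordinal.{0} → Set Ordinal.{0} :=
    fun a => {i | i < idx a ∧ D.pos (Astar ∩ A a i)} with hYdef
  -- choose the injections witnessing `SizeLE`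
  have hsize' : ∀ a : Ordinal.{0}, ∃ g : Ordinal.{0} → Ordinal.{0}, a < k0 →
      ((∀ i ∈ Y a, g i < lam.ord) ∧ ∀ i ∈ Y a, ∀ j ∈ Y a, g i = g j → i = j) := by
    intro a
    by_cases ha : a < k0
    · obtain ⟨g, h1, h2⟩ := hsize a ha
      exact ⟨g, fun _ => ⟨h1, h2⟩⟩
    · exact ⟨fun _ => 0, fun h => absurd h ha⟩
  choose gf hgf using hsize'
  set Bset : Ordinal.{0} → Ordinal.{0} → Set Ordinal.{0} :=
    fun a ζ => {x | ∃ i, i ∈ Y a ∧ gf a i = ζ ∧ x ∈ Astar ∩ A a i} with hBsetdef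
  set Nabla : Ordinal.{0} → Set Ordinal.{0} :=
    fun a => {x | ∃ ζ, ζ < x ∧ x ∈ Bset a ζ} with hNabladef
  -- each `Astar \ Nabla a` is null
  have hNa : ∀ a, a < k0 → Set.Iio lam.ord \ (Astar \ Nabla a) ∈ D.sets := by
    intro a ha
    apply NFaux.not_pos D (fun x hx => hAstarPos.1 hx.1)
    intro hposN
    obtain ⟨i, hi, hposNA⟩ := (hA a ha).2.2 _ hposN
    have hsubIio : Astar ∩ A a i ⊆ Set.Iio lam.ord := fun x hx => hAstarPos.1 hx.1
    have hiY : i ∈ Y a := ⟨hi, NFaux.pos_superset D hposNA (fun x hx => ⟨hx.1.1, hx.2⟩) hsubIio⟩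
    have hζ : gf a i < lam.ord := (hgf a ha).1 i hiY
    have hζ1 : gf a i + 1 < lam.ord := by
      rw [Ordinal.add_one_eq_succ]; exact hlim.succ_lt hζ
    have htail := D.tail_mem (gf a i + 1) hζ1
    obtain ⟨x, hx1, hx2⟩ := NFaux.pos_nonempty D h0 (NFaux.pos_inter D hposNA htail)
    have hζx : gf a i < x := by
      have h1 : gf a i < gf a i + 1 := by
        rw [Ordinal.add_one_eq_succ]; exact Order.lt_succ _
      exact h1.trans_le hx2.1
    exact hx1.1.2 ⟨gf a i, hζx, ⟨i, hiY, rfl, hx1.1.1, hx1.2⟩⟩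
  have hE := D.complete k0 hk0lam (fun a => Set.Iio lam.ord \ (Astar \ Nabla a))
    (fun a ha => hNa a ha)
  set S : Set Ordinal.{0} :=
    (Astar ∩ {x | x < lam.ord ∧ ∀ a, a < k0 → x ∈ Set.Iio lam.ord \ (Astar \ Nabla a)}) ∩
      {i | i < lam.ord ∧ kappa ≤ i.cof} with hSdef
  have hSpos : D.pos S := NFaux.pos_inter D (NFaux.pos_inter D hAstarPos hE) hcof
  have hSsub : S ⊆ Astar := fun x hx => hx.1.1
  have hnabla : ∀ x ∈ S, ∀ a, a < k0 → ∃ ζ, ζ < x ∧ x ∈ Bset a ζ := by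
    intro x hx a ha
    have h1 : x ∈ Nabla a := by
      by_contra hc
      exact (hx.1.2.2 a ha).2 ⟨hx.1.1, hc⟩
    exact h1
  -- choose the least-witness functions
  have hfex : ∀ a x : Ordinal.{0}, ∃ ζ, (∃ ζ', ζ' < x ∧ x ∈ Bset a ζ') →
      (ζ < x ∧ x ∈ Bset a ζ) := by
    intro a x
    by_cases h : ∃ ζ', ζ' < x ∧ x ∈ Bset a ζ'
    · obtain ⟨ζ, h1, h2⟩ := h; exact ⟨ζ, fun _ => ⟨h1, h2⟩⟩
    · exact ⟨0, fun hh => absurd hh h⟩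
  choose f hf using hfex
  -- the sup of the `f a x` is regressive on `S`
  set gs : Ordinal.{0} → Ordinal.{0} := fun x => Ordinal.bsup k0 (fun a _ => f a x) with hgsdef
  have hgs : ∀ x ∈ S, gs x < x := by
    intro x hx
    apply Ordinal.bsup_lt_ord (lt_of_lt_of_le (Cardinal.lt_ord.mp hk0) hx.2.2)
    exact fun a ha => (hf a x (hnabla x hx a ha)).1
  obtain ⟨ξ, hS1pos⟩ := NFaux.fodor D h0 hSpos gs hgs
  set S1 : Set Ordinal.{0} := {x | x ∈ S ∧ gs x = ξ} with hS1def
  have hbound : ∀ x ∈ S1, ∀ a, a < k0 → f a x ≤ ξ := by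
    intro x hx a ha
    have h1 : f a x ≤ gs x := Ordinal.le_bsup (fun a _ => f a x) a ha
    rwa [hx.2] at h1
  obtain ⟨x0', hx0'⟩ := NFaux.pos_nonempty D h0 hS1pos
  have hξlam : ξ < lam.ord := by
    have h1 := hgs x0' hx0'.1
    rw [hx0'.2] at h1
    exact h1.trans (hSpos.1 hx0'.1)
  -- pigeonhole: the tuple `⟨f a x : a < k0⟩` is constant on a positive subset
  set H : Ordinal.{0} → (Ordinal.{0} → Ordinal.{0}) :=
    fun x a => if a < k0 then f a x else 0 with hHdef
  set Im : Set (Ordinal.{0} → Ordinal.{0}) := H '' S1 with hImdef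
  set θ : Cardinal := max (ξ + 1).card 2 with hθdef
  have hθlam : θ < lam := by
    apply max_lt
    · apply Cardinal.lt_ord.mp
      rw [Ordinal.add_one_eq_succ]; exact hlim.succ_lt hξlam
    · exact lt_of_lt_of_le (by exact_mod_cast Cardinal.nat_lt_aleph0 2) hlaleph
  have hθ0 : θ ≠ 0 := by
    have h2 : (2 : Cardinal) ≤ θ := le_max_right _ _
    intro h; rw [h] at h2; exact absurd h2 (by norm_num)
  have hpowlt : θ ^ kappa < lam := hpow θ hθlam
  set b : Ordinal.{0} := (θ ^ kappa).ord with hbdef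
  have hblam : b < lam.ord := Cardinal.ord_lt_ord.mpr hpowlt
  -- build an injection of `Im` into `Iio b`
  have hT : #(↥(Set.Iio k0) → ↥(Set.Iio (ξ + 1))) ≤ Cardinal.lift.{1} (θ ^ kappa) := by
    rw [Cardinal.mk_arrow, Cardinal.lift_id, Cardinal.lift_id,
      Ordinal.mk_Iio_ordinal, Ordinal.mk_Iio_ordinal, ← Cardinal.lift_power]
    apply Cardinal.lift_le.mpr
    calc (ξ + 1).card ^ k0.card ≤ θ ^ k0.card :=
          Cardinal.power_le_power_right (le_max_left _ _)
      _ ≤ θ ^ kappa := Cardinal.power_le_power_left hθ0 (le_of_lt (Cardinal.lt_ord.mp hk0))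
  have hsuccξ : ξ < ξ + 1 := by
    rw [Ordinal.add_one_eq_succ]; exact Order.lt_succ ξ
  have hφ : ∃ φ : ↥Im → (↥(Set.Iio k0) → ↥(Set.Iio (ξ + 1))), Function.Injective φ := by
    refine ⟨fun g a => ⟨min (g.1 a.1) ξ, ?_⟩, ?_⟩
    · exact (min_le_right _ _).trans_lt hsuccξ
    · intro g g' hgg
      obtain ⟨x, hxS1, hxg⟩ := g.2
      obtain ⟨x', hxS1', hxg'⟩ := g'.2
      apply Subtype.ext
      funext a
      by_cases ha : a < k0
      · have h1 : g.1 a ≤ ξ := by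
          rw [← hxg]; simp only [hHdef, if_pos ha]; exact hbound x hxS1 a ha
        have h2 : g'.1 a ≤ ξ := by
          rw [← hxg']; simp only [hHdef, if_pos ha]; exact hbound x' hxS1' a ha
        have h3 := congrFun hgg ⟨a, ha⟩
        have h4 : min (g.1 a) ξ = min (g'.1 a) ξ := congrArg Subtype.val h3
        rwa [min_eq_left h1, min_eq_left h2] at h4
      · have h1 : g.1 a = 0 := by rw [← hxg]; simp only [hHdef, if_neg ha]
        have h2 : g'.1 a = 0 := by rw [← hxg']; simp only [hHdef, if_neg ha]
        rw [h1, h2]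
  obtain ⟨φ, hφinj⟩ := hφ
  have hIm : #(↥Im) ≤ #(↥(Set.Iio b)) := by
    refine (Cardinal.mk_le_of_injective hφinj).trans (hT.trans ?_)
    rw [Ordinal.mk_Iio_ordinal, hbdef, Cardinal.card_ord]
  obtain ⟨emb⟩ := Cardinal.le_def _ _ |>.mp hIm
  set j : (Ordinal.{0} → Ordinal.{0}) → Ordinal.{0} :=
    fun g => if h : g ∈ Im then (emb ⟨g, h⟩).1 else 0 with hjdef
  have hj1 : ∀ x ∈ S1, j (H x) < b := by
    intro x hx
    have hmem : H x ∈ Im := Set.mem_image_of_mem H hx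
    simp only [hjdef, dif_pos hmem]
    exact (emb ⟨H x, hmem⟩).2
  have hj2 : ∀ x ∈ S1, ∀ y ∈ S1, j (H x) = j (H y) → H x = H y := by
    intro x hx y hy hxy
    have hmx : H x ∈ Im := Set.mem_image_of_mem H hx
    have hmy : H y ∈ Im := Set.mem_image_of_mem H hy
    simp only [hjdef, dif_pos hmx, dif_pos hmy] at hxy
    have := emb.injective (Subtype.ext hxy)
    exact congrArg Subtype.val this
  obtain ⟨t, hS2pos⟩ := NFaux.pigeonhole D h0 hS1pos H b hblam j hj1 hj2
  set S2 : Set Ordinal.{0} := {x | x ∈ S1 ∧ H x = t} with hS2def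
  have hfconst : ∀ x ∈ S2, ∀ a, a < k0 → f a x = t a := by
    intro x hx a ha
    have h1 := congrFun hx.2 a
    simp only [hHdef, if_pos ha] at h1
    exact h1
  refine ⟨S2, hS2pos, fun x hx => hAstarB (hSsub hx.1.1), ?_⟩
  intro a ha
  obtain ⟨x0, hx00⟩ := NFaux.pos_nonempty D h0 hS2pos
  obtain ⟨i0, hi0Y, hgi0, hx0A⟩ := (hf a x0 (hnabla x0 hx00.1.1 a ha)).2
  have hgi0t : gf a i0 = t a := by rw [hgi0, hfconst x0 hx00 a ha]
  have hsub2 : S2 ⊆ A a i0 := by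
    intro x hx
    obtain ⟨i, hiY, hgi, hxA⟩ := (hf a x (hnabla x hx.1.1 a ha)).2
    have hii : i = i0 := (hgf a ha).2 i hiY i0 hi0Y
      (by rw [hgi, hfconst x hx a ha, ← hgi0t])
    rw [← hii]; exact hxA.2
  refine ⟨i0, ⟨hi0Y.1, ?_⟩, ?_⟩
  · rwa [Set.inter_eq_left.mpr hsub2]
  · rintro i ⟨hi, hipos⟩
    by_contra hne
    apply (hA a ha).2.1 i0 hi0Y.1 i hi (fun h => hne h.symm)
    refine NFaux.pos_superset D hipos (fun x hx => ⟨hsub2 hx.1, hx.2⟩) ?_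
    exact fun x hx => ((hA a ha).1 i0 hi0Y.1).1 hx.1
end
end

section
/- Let D and D₁ be normal filters over a regular cardinal λ, and suppose the principle C_{D,D₁} holds: for every T ∈ D⁺, the set F(T) = {δ < λ : T ∩ δ is stationary in δ} belongs to D₁⁺. Let Q be a κ-closed forcing notion for a regular κ < λ. Then in V^Q, C_{D,D₁} is not forced to fail (i.e. no condition forces the existence of S ∈ (D^Q)⁺ with F(S) ∉ (D₁^Q)⁺), provided that the principle (*)⁷_{D,K,D₁,Q} holds: (α) (*)⁶_{D,K,Q} or (*)³_{D,K,Q} holds, and either (β₁) for every p̄ ∈ K the set {δ < λ : τ_p̄ ∩ δ is forced to be stationary} belongs to D₁⁺, or (β₂) for every p̄ ∈ K the set {δ < λ : τ_p̄ ∩ δ is not forced to be nonstationary} belongs to D₁⁺ and Q satisfies the λ-c.c. -/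
open Set Cardinal

noncomputable section

/-! ### Statement 7 (Proposition 1.12) -/

/-- `q` forces `F(S) = {δ < λ : S ∩ δ is stationary in δ}` to be outside
`(D₁^Q)⁺`, i.e. forces that some `C ∈ D₁` is disjoint from `F(S)`. -/
def ForcesFNotPos {lam : Ordinal.{0}} (P : ForcingNotion) (D1 : NormalFilterOn lam)
    (q : P.Cond) (S : SetName P) : Prop :=
  ∀ r, P.le q r → ∃ s, P.le r s ∧ ∃ C ∈ D1.sets, ∀ d ∈ C, ForcesNonstatIn P s S d

/-- Proposition 1.12:  Let `D, D₁` be normal filters over a regular `λ` with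
`C_{D,D₁}`:  `F(T) = {δ < λ : T ∩ δ stationary} ∈ D₁⁺` for every `T ∈ D⁺`.
Let `Q` be `κ`-closed for a regular `κ < λ`.  Then in `V^Q` the principle
`C_{D,D₁}` is not forced to fail, provided `(*)⁷_{D,K,D₁,Q}` holds. -/
theorem prop_1_12 (kappa lam : Cardinal) (hkreg : kappa.IsRegular) (hlreg : lam.IsRegular)
    (hkl : kappa < lam)
    (D D1 : NormalFilterOn lam.ord)
    (hCD : CDPrinciple D D1)
    (P : ForcingNotion) (hclosed : KappaClosed P kappa.ord)
    (K : Set (PSeq P)) (hstar7 : StarSeven P D D1 K kappa.ord) :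
    ¬ ∃ (q : P.Cond) (S : SetName P), IsSetName P S ∧
        ForcesPos P D q S ∧ ForcesFNotPos P D1 q S := by
  rintro ⟨q, S, hS, hpos, hFnot⟩
  obtain ⟨s, hqs, C, hC, hns⟩ := hFnot q (P.le_refl q)
  have hposS : ForcesPos P D s S := fun C' hC' r hr => hpos C' hC' r (P.le_trans hqs hr)
  obtain ⟨hstar, hbeta⟩ := hstar7
  have hclause5 : ∀ (q : P.Cond) (τ : SetName P), IsSetName P τ → ForcesPos P D q τ →
      ∃ x ∈ K, (∀ i ∈ x.1, P.le q (x.2 i)) ∧ ForcesSubset P q (tauOf P x) τ := by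
    rcases hstar with h | h
    · exact h.2.2.2.2.1
    · exact h.2.2.2.2.1
  obtain ⟨x, hxK, hxge, hxsub⟩ := hclause5 s S hS hposS
  -- helper: a D1-positive set meets every member of D1
  have hmeet : ∀ X : Set Ordinal.{0}, D1.pos X → ∃ d ∈ C, d ∈ X := by
    intro X hX
    by_contra h
    push_neg at h
    apply hX.2
    refine D1.superset_mem C hC _ Set.diff_subset fun d hd => ⟨D1.subset_field C hC hd, h d hd⟩
  rcases hbeta with h1 | ⟨h1, _⟩
  · -- β₁ : τ_x is forced stationary in D1-positively many d
    obtain ⟨d, hdC, -, hstat⟩ := hmeet _ (h1 x hxK)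
    obtain ⟨s', hss', C', hclub, hdisj⟩ := hns d hdC s (P.le_refl s)
    obtain ⟨s'', hs'', i, hid, hmemτ, hmemC⟩ := hstat s' (P.one_le s') C' hclub
    exact hdisj i hid s'' hs''
      ⟨hxsub i s'' (P.le_trans hss' hs'') hmemτ, hmemC⟩
  · -- β₂ : τ_x is not forced nonstationary in D1-positively many d
    obtain ⟨d, hdC, -, hd2⟩ := hmeet _ (h1 x hxK)
    unfold ForcesNonstatIn at hd2
    push_neg at hd2
    obtain ⟨r0, -, hr0⟩ := hd2
    by_cases hcompat : ∃ t, P.le r0 t ∧ P.le s t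
    · obtain ⟨t, hr0t, hst⟩ := hcompat
      obtain ⟨s', hts', C', hclub, hdisj⟩ := hns d hdC t hst
      obtain ⟨i, hid, t', hs't', hmemτ, hmemC⟩ := hr0 s' (P.le_trans hr0t hts') C' hclub
      exact hdisj i hid t' hs't'
        ⟨hxsub i t' (P.le_trans hst (P.le_trans hts' hs't')) hmemτ, hmemC⟩
    · -- r0 incompatible with s: r0 forces τ_x ∩ d empty, hence nonstationary
      obtain ⟨s1, hss1, C1, hclub1, -⟩ := hns d hdC s (P.le_refl s)
      have hclub' : ForcesClubIn P r0 (groundName P (Set.Iio d)) d := by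
        constructor
        · intro b hb r hr
          obtain ⟨u, hu, i, hbi, hid, -⟩ := hclub1.1 b hb s1 (P.le_refl s1)
          exact ⟨r, P.le_refl r, i, hbi, hid, fun v hv => ⟨v, P.le_refl v, hid⟩⟩
        · intro y hy _ t _ _
          exact fun v hv => ⟨v, P.le_refl v, hy⟩
      obtain ⟨i, hid, t, hr0t, hmemτ, -⟩ := hr0 r0 (P.le_refl r0) _ hclub'
      obtain ⟨u, htu, hu⟩ := hmemτ t (P.le_refl t)
      exact hcompat ⟨u, P.le_trans hr0t htu, P.le_trans (hxge i hu.1) hu.2⟩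
end
end
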